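/- Let Σ be an n×n positive semidefinite matrix, l ∈ ℝ^n, and W̃ an n×(q+1) real matrix. Define A = D · Ω where Ω is the (q+1)×(q+1) Gram-type matrix with blocks [[l'Σl, l'ΣW̃],[W̃'Σl, W̃'ΣW̃]] and D = diag(1, −I_q). Then all q+1 eigenvalues of A are real, and at most one of them is strictly positive (the remaining ones are ≤ 0). -/

import Mathlib

open Matrix Polynomial

lemma myCharpolyConj {m : Type*} [Fintype m] [DecidableEq m]
    (S T B : Matrix m m ℝ) (hB : B.det ≠ 0) (h : S * B = B * T) :
    S.charpoly = T.charpoly := by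
  have hC : (charmatrix S) * (B.map C) = (B.map C) * charmatrix T := by
    unfold charmatrix
    rw [sub_mul, mul_sub]
    congr 1
    · exact (scalar_commute (X : ℝ[X]) (fun r => Commute.all _ r) (B.map C)).eq
    · simp only [RingHom.mapMatrix_apply, ← Matrix.map_mul, h]
  have hdet := congrArg Matrix.det hC
  rw [det_mul, det_mul] at hdet
  have hBC : (B.map C).det ≠ 0 := by
    have := (Polynomial.C : ℝ →+* ℝ[X]).map_det B
    rw [RingHom.mapMatrix_apply] at this
    rw [← this]
    simpa using hB
  have : (B.map C).det * S.charpoly = (B.map C).det * T.charpoly := by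
    rw [Matrix.charpoly, Matrix.charpoly, mul_comm] at *
    linear_combination hdet
  exact mul_left_cancel₀ hBC this

lemma myCharpolyDiagonal {m : Type*} [Fintype m] [DecidableEq m] (v : m → ℝ) :
    (diagonal v).charpoly = ∏ i, (X - C (v i)) := by
  have h : charmatrix (diagonal v) = diagonal (fun i => X - C (v i)) := by
    ext i j
    by_cases hij : i = j
    · subst hij; simp [charmatrix_apply_eq]
    · rw [charmatrix_apply_ne _ _ _ hij, diagonal_apply_ne _ hij, diagonal_apply_ne _ hij]
      simp
  rw [Matrix.charpoly, h, det_diagonal]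

theorem stmt5 (n q : ℕ) (Sig : Matrix (Fin n) (Fin n) ℝ) (hSig : Sig.PosSemidef)
    (l : Fin n → ℝ) (W : Matrix (Fin n) (Fin q) ℝ)
    (W₀ : Matrix (Fin n) (Fin (q + 1)) ℝ)
    (hW₀l : ∀ r, W₀ r 0 = l r)
    (hW₀W : ∀ (r : Fin n) (i : Fin q), W₀ r i.succ = W r i)
    (Ω : Matrix (Fin (q + 1)) (Fin (q + 1)) ℝ)
    (hΩ : Ω = W₀ᵀ * Sig * W₀) (hpd : Ω.PosDef)
    (D A : Matrix (Fin (q + 1)) (Fin (q + 1)) ℝ)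
    (hD : D = Matrix.diagonal (fun i => if i = 0 then (1 : ℝ) else -1))
    (hA : A = D * Ω) :
    (∀ z ∈ ((A.map (algebraMap ℝ ℂ)).charpoly).roots, z.im = 0) ∧
    Multiset.card (((A.map (algebraMap ℝ ℂ)).charpoly).roots.filter fun z => 0 < z.re) ≤ 1 := by
  classical
  have hΩpsd := hpd.posSemidef
  obtain ⟨B, hBB, hBH⟩ : ∃ B : Matrix (Fin (q + 1)) (Fin (q + 1)) ℝ, B * B = Ω ∧ B.IsHermitian := by
    open scoped MatrixOrder in
    exact ⟨CFC.sqrt Ω, CFC.sqrt_mul_sqrt_self Ω hΩpsd.nonneg, (CFC.sqrt_nonneg Ω).posSemidef.1⟩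
  have hBT : Bᵀ = B := by
    have := hBH
    rwa [Matrix.IsHermitian, conjTranspose_eq_transpose_of_trivial] at this
  have hdetB : B.det ≠ 0 := by
    intro h0
    have hdp := hpd.det_pos
    rw [← hBB, det_mul, h0, mul_zero] at hdp
    exact lt_irrefl _ hdp
  have hDT : Dᵀ = D := by rw [hD, diagonal_transpose]
  set S := B * (D * B) with hSdef
  have hSB : S * B = B * A := by
    rw [hSdef, hA, ← hBB]
    simp only [mul_assoc]
  have hcpSA : S.charpoly = A.charpoly := myCharpolyConj S A B hdetB hSB
  have hSH : S.IsHermitian := by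
    rw [Matrix.IsHermitian, conjTranspose_eq_transpose_of_trivial, hSdef,
      transpose_mul, transpose_mul, hBT, hDT]
    rw [mul_assoc]
  -- eigenvalues
  set d : Fin (q + 1) → ℝ := hSH.eigenvalues with hddef
  set U : Matrix (Fin (q + 1)) (Fin (q + 1)) ℝ := (hSH.eigenvectorUnitary : Matrix (Fin (q+1)) (Fin (q+1)) ℝ) with hUdef
  have hUU : star U * U = 1 := Unitary.coe_star_mul_self hSH.eigenvectorUnitary
  have hUU' : U * star U = 1 := Unitary.coe_mul_star_self hSH.eigenvectorUnitary
  have hdetU : U.det ≠ 0 := by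
    intro h0
    have := congrArg Matrix.det hUU'
    rw [det_mul, h0, zero_mul, det_one] at this
    exact zero_ne_one this
  have hspec : S * U = U * diagonal d := by
    have h1 := hSH.spectral_theorem
    have : (RCLike.ofReal ∘ hSH.eigenvalues : Fin (q+1) → ℝ) = d := by
      funext i; simp [hddef]
    rw [this] at h1
    conv_lhs => rw [h1]
    rw [Unitary.conjStarAlgAut_apply, ← hUdef, mul_assoc (U * diagonal d), hUU, mul_one]
  have hcpSd : S.charpoly = (diagonal d).charpoly := myCharpolyConj S (diagonal d) U hdetU hspec
  have hcpA : A.charpoly = ∏ i, (X - C (d i)) := by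
    rw [← hcpSA, hcpSd, myCharpolyDiagonal]
  have hroots : ((A.map (algebraMap ℝ ℂ)).charpoly).roots
      = (Finset.univ.val.map fun i => ((d i : ℝ) : ℂ)) := by
    rw [Matrix.charpoly_map, hcpA, Polynomial.map_prod]
    simp only [Polynomial.map_sub, Polynomial.map_X, Polynomial.map_C]
    have h2 : (∏ i, ((X : ℂ[X]) - C (algebraMap ℝ ℂ (d i))))
        = ((Finset.univ.val.map fun i : Fin (q+1) => ((d i : ℝ) : ℂ)).map fun a => X - C a).prod := by
      rw [Multiset.map_map, Finset.prod_eq_multiset_prod]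
      rfl
    rw [h2, Polynomial.roots_multiset_prod_X_sub_C]
  -- key claim: at most one positive eigenvalue
  have key : ∀ i j : Fin (q + 1), 0 < d i → 0 < d j → i = j := by
    intro i j hi hj
    by_contra hij
    set v : Fin (q + 1) → ℝ := ⇑(hSH.eigenvectorBasis i) with hv
    set w : Fin (q + 1) → ℝ := ⇑(hSH.eigenvectorBasis j) with hw
    have hSv : S *ᵥ v = d i • v := hSH.mulVec_eigenvectorBasis i
    have hSw : S *ᵥ w = d j • w := hSH.mulVec_eigenvectorBasis j
    have horth := hSH.eigenvectorBasis.orthonormal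
    rw [orthonormal_iff_ite] at horth
    have hdot : ∀ k m : Fin (q + 1),
        (⇑(hSH.eigenvectorBasis k) : Fin (q+1) → ℝ) ⬝ᵥ ⇑(hSH.eigenvectorBasis m)
          = if k = m then 1 else 0 := by
      intro k m
      have h := horth k m
      simpa [PiLp.inner_apply, dotProduct, mul_comm] using h
    have d1 := hdot i i; have d2 := hdot j j
    have d3 := hdot i j; have d4 := hdot j i
    rw [if_pos rfl] at d1 d2
    rw [if_neg hij] at d3
    rw [if_neg (Ne.symm hij)] at d4
    have quad : ∀ x : Fin (q + 1) → ℝ, (B *ᵥ x) 0 = 0 → x ⬝ᵥ (S *ᵥ x) ≤ 0 := by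
      intro x hx0
      have h1 : x ⬝ᵥ (S *ᵥ x) = (B *ᵥ x) ⬝ᵥ (D *ᵥ (B *ᵥ x)) := by
        rw [hSdef, ← mulVec_mulVec, ← mulVec_mulVec, dotProduct_mulVec, ← mulVec_transpose, hBT]
      rw [h1]
      set y := B *ᵥ x with hy
      have h2 : y ⬝ᵥ (D *ᵥ y) = ∑ k, y k * ((if k = 0 then (1:ℝ) else -1) * y k) := by
        rw [hD]
        simp only [dotProduct, mulVec_diagonal]
      rw [h2]
      apply Finset.sum_nonpos
      intro k _
      by_cases hk : k = 0
      · subst hk; rw [hx0]; simp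
      · rw [if_neg hk]; nlinarith [mul_self_nonneg (y k)]
    by_cases hb : (B *ᵥ v) 0 = 0
    · have h1 := quad v hb
      have h2 : v ⬝ᵥ (S *ᵥ v) = d i := by
        rw [hSv, dotProduct_smul, d1, smul_eq_mul, mul_one]
      rw [h2] at h1
      linarith
    · set a := (B *ᵥ w) 0 with ha
      set b := (B *ᵥ v) 0 with hbdef
      set x := a • v - b • w with hx
      have hx0 : (B *ᵥ x) 0 = 0 := by
        rw [hx, mulVec_sub, mulVec_smul, mulVec_smul]
        simp only [Pi.sub_apply, Pi.smul_apply, smul_eq_mul, ← ha, ← hbdef]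
        ring
      have h1 := quad x hx0
      have h2 : x ⬝ᵥ (S *ᵥ x) = a ^ 2 * d i + b ^ 2 * d j := by
        rw [hx, mulVec_sub, mulVec_smul, mulVec_smul, hSv, hSw]
        simp only [sub_dotProduct, dotProduct_sub, smul_dotProduct, dotProduct_smul,
          smul_eq_mul, d1, d2, d3, d4]
        rw [show w ⬝ᵥ v = 0 from d4, show v ⬝ᵥ w = 0 from d3, show v ⬝ᵥ v = 1 from d1,
          show w ⬝ᵥ w = 1 from d2]
        ring
      rw [h2] at h1
      nlinarith [mul_pos (sq_pos_of_ne_zero hb) hj, mul_nonneg (sq_nonneg a) hi.le]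
  constructor
  · intro z hz
    rw [hroots] at hz
    obtain ⟨i, -, rfl⟩ := Multiset.mem_map.mp hz
    exact Complex.ofReal_im _
  · rw [hroots, Multiset.filter_map, Multiset.card_map]
    have hfe : Multiset.filter ((fun z : ℂ => 0 < z.re) ∘ fun i : Fin (q+1) => ((d i : ℝ) : ℂ))
        Finset.univ.val = (Finset.univ.filter fun i : Fin (q+1) => 0 < d i).val := by
      rw [Finset.filter_val]
      apply Multiset.filter_congr
      intro i _
      simp [Function.comp, Complex.ofReal_re]
    rw [hfe]
    have : (Finset.univ.filter fun i : Fin (q+1) => 0 < d i).card ≤ 1 := by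
      apply Finset.card_le_one.mpr
      intro x hx y hy
      rw [Finset.mem_filter] at hx hy
      exact key x y hx.2 hy.2
    exact this
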